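/- arXiv:2009.13189 — 2 statements merged into one kernel-verified Lean document; each statement's English description precedes it below -/
import Mathlib

section
/- Let p ≥ 1 and for each ℓ ∈ ℕ let φ_ℓ(z) = 1 − φ_{ℓ;1}z − ⋯ − φ_{ℓ;p}z^p be a complex polynomial with real coefficients satisfying Σ_{ℓ=0}^∞ (2ℓ+1)·φ_{ℓ;j}² < ∞ for each j = 1,…,p. If φ_ℓ(z) ≠ 0 for all |z| ≤ 1 and all ℓ ≥ 0, then there exists δ > 0 such that φ_ℓ(z) ≠ 0 for all |z| < 1 + δ and all ℓ ≥ 0; equivalently, there exists ξ_* > 1 such that every root ξ of every polynomial φ_ℓ of nonzero degree satisfies |ξ| ≥ ξ_*, uniformly over ℓ. -/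
noncomputable section

open MeasureTheory Complex Real Filter Topology

/-- The unit sphere S² in ℝ³. -/
abbrev S2 : Type := Metric.sphere (0 : EuclideanSpace ℝ (Fin 3)) 1

/-- The rotation group SO(3), realized as linear isometries of ℝ³ with determinant 1. -/
def SO3 : Type :=
  {g : EuclideanSpace ℝ (Fin 3) ≃ₗᵢ[ℝ] EuclideanSpace ℝ (Fin 3) //
    LinearMap.det (g.toLinearEquiv : EuclideanSpace ℝ (Fin 3) →ₗ[ℝ] EuclideanSpace ℝ (Fin 3)) = 1}

/-- Action of a rotation on the sphere. -/
def SO3.act (g : SO3) (x : S2) : S2 :=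
  ⟨g.1 x.1, by
    rw [mem_sphere_zero_iff_norm, g.1.norm_map]
    exact mem_sphere_zero_iff_norm.mp x.2⟩

/-- The ℓ-th Legendre polynomial (via the Rodrigues formula). -/
def legendreP (ℓ : ℕ) (u : ℝ) : ℝ :=
  (1 / (2 ^ ℓ * (Nat.factorial ℓ))) *
    (Polynomial.derivative^[ℓ] ((Polynomial.X ^ 2 - 1) ^ ℓ)).eval u

/-- Euclidean inner product of two points of the sphere. -/
def sdot (x y : S2) : ℝ := inner ℝ (x : EuclideanSpace ℝ (Fin 3)) (y : EuclideanSpace ℝ (Fin 3))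

/-- A zero-mean, jointly measurable, square-integrable space-time spherical random field which
is isotropic (in space) and stationary (in time):
`E[T(x,t)T(y,s)] = E[T(gx,t+h)T(gy,s+h)]` for all rotations `g` and time shifts `h`. -/
structure IsIsotropicStationary {Ω : Type} [MeasurableSpace Ω] (P : Measure Ω)
    (T : S2 → ℤ → Ω → ℝ) : Prop where
  measurable : ∀ t : ℤ, Measurable (fun pr : S2 × Ω => T pr.1 t pr.2)
  zeroMean : ∀ x t, ∫ ω, T x t ω ∂P = 0
  sqInt : ∀ x t, MemLp (fun ω => T x t ω) 2 P
  invariant : ∀ (g : SO3) (x y : S2) (t s h : ℤ),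
    ∫ ω, T x t ω * T y s ω ∂P = ∫ ω, T (g.act x) (t + h) ω * T (g.act y) (s + h) ω ∂P

/-- The family `Y ℓ m` (`|m| ≤ ℓ`) is an orthonormal basis of spherical harmonics of `L²(S²;ℂ)`:
measurable, orthonormal, complete, and satisfying the addition theorem with the Legendre
polynomials. -/
structure IsSphericalHarmonics (μ : Measure S2) (Y : ℕ → ℤ → S2 → ℂ) : Prop where
  measurable : ∀ ℓ m, Measurable (Y ℓ m)
  memL2 : ∀ ℓ m, MemLp (Y ℓ m) 2 μ
  orthonormal : ∀ (ℓ : ℕ) (m : ℤ) (ℓ' : ℕ) (m' : ℤ), |m| ≤ (ℓ : ℤ) → |m'| ≤ (ℓ' : ℤ) →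
    ∫ x, Y ℓ m x * (starRingEnd ℂ) (Y ℓ' m' x) ∂μ = if ℓ = ℓ' ∧ m = m' then 1 else 0
  complete : ∀ f : S2 → ℂ, MemLp f 2 μ →
    (∀ (ℓ : ℕ) (m : ℤ), |m| ≤ (ℓ : ℤ) → ∫ x, f x * (starRingEnd ℂ) (Y ℓ m x) ∂μ = 0) →
    f =ᵐ[μ] 0
  addition : ∀ (ℓ : ℕ) (x y : S2),
    ∑ m ∈ Finset.Icc (-(ℓ : ℤ)) (ℓ : ℤ), Y ℓ m x * (starRingEnd ℂ) (Y ℓ m y)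
      = (((2 * ℓ + 1) / (4 * π) * legendreP ℓ (sdot x y) : ℝ) : ℂ)

/-- Harmonic coefficient `a_{ℓ,m}(t) = ∫_{S²} F(x,t) conj(Y_{ℓ,m}(x)) dx` of a real random
field `F`. -/
def hCoeff {Ω : Type} (μ : Measure S2) (Y : ℕ → ℤ → S2 → ℂ) (F : S2 → ℤ → Ω → ℝ)
    (ℓ : ℕ) (m : ℤ) (t : ℤ) (ω : Ω) : ℂ :=
  ∫ x, (F x t ω : ℂ) * (starRingEnd ℂ) (Y ℓ m x) ∂μ

/-- Autocovariance kernel `r_t(x,y) = E[T(x,t) T(y,0)]`. -/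
def covKer {Ω : Type} [MeasurableSpace Ω] (P : Measure Ω) (T : S2 → ℤ → Ω → ℝ)
    (t : ℤ) (x y : S2) : ℝ :=
  ∫ ω, T x t ω * T y 0 ω ∂P

/-- Angular power spectrum `C_ℓ(t) = E[a_{ℓ,m}(t) conj(a_{ℓ,m}(0))]` (real-valued; computed
with the representative `m = 0`). -/
def angPow {Ω : Type} [MeasurableSpace Ω] (P : Measure Ω) (μ : Measure S2)
    (Y : ℕ → ℤ → S2 → ℂ) (T : S2 → ℤ → Ω → ℝ) (ℓ : ℕ) (t : ℤ) : ℝ :=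
  (∫ ω, hCoeff μ Y T ℓ 0 t ω * (starRingEnd ℂ) (hCoeff μ Y T ℓ 0 0 ω) ∂P).re

/-- The spectral density kernel `f_λ(x,y) = (1/2π) Σ_{t∈ℤ} e^{-iλt} r_t(x,y)`. -/
def specKer (r : ℤ → S2 → S2 → ℝ) (lam : ℝ) (x y : S2) : ℂ :=
  (1 / (2 * π)) * ∑' t : ℤ, Complex.exp (-Complex.I * lam * t) * (r t x y : ℂ)

/-- The eigenvalues `f_ℓ(λ) = (1/2π) Σ_{t∈ℤ} e^{-itλ} C_ℓ(t)` of the spectral density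
operator. -/
def specEig (C : ℕ → ℤ → ℝ) (ℓ : ℕ) (lam : ℝ) : ℂ :=
  (1 / (2 * π)) * ∑' t : ℤ, Complex.exp (-Complex.I * t * lam) * (C ℓ t : ℂ)

/-- Condition (i): summability of the `L²(S²×S²)` norms of the autocovariance kernels. -/
def CondI (μ : Measure S2) (r : ℤ → S2 → S2 → ℝ) : Prop :=
  (∀ t, MemLp (fun pr : S2 × S2 => r t pr.1 pr.2) 2 (μ.prod μ)) ∧
    Summable (fun t : ℤ => (eLpNorm (fun pr : S2 × S2 => r t pr.1 pr.2) 2 (μ.prod μ)).toReal)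

/-- Condition (ii): summability of the trace (nuclear) norms of the autocovariance operators;
for an isotropic field `‖𝓡_t‖_TR = Σ_ℓ (2ℓ+1)|C_ℓ(t)|`. -/
def CondII (C : ℕ → ℤ → ℝ) : Prop :=
  (∀ t : ℤ, Summable (fun ℓ : ℕ => (2 * (ℓ : ℝ) + 1) * |C ℓ t|)) ∧
    Summable (fun t : ℤ => ∑' ℓ : ℕ, (2 * (ℓ : ℝ) + 1) * |C ℓ t|)

/-- The autoregressive polynomial `φ_ℓ(z) = 1 - φ_{ℓ;1} z - ⋯ - φ_{ℓ;p} z^p`. -/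
def phiPoly (p : ℕ) (φ : ℕ → ℕ → ℝ) (ℓ : ℕ) (z : ℂ) : ℂ :=
  1 - ∑ j ∈ Finset.range p, (φ ℓ (j + 1) : ℂ) * z ^ (j + 1)

/-- The moving-average polynomial `θ_ℓ(z) = 1 + θ_{ℓ;1} z + ⋯ + θ_{ℓ;q} z^q`. -/
def thetaPoly (q : ℕ) (θ : ℕ → ℕ → ℝ) (ℓ : ℕ) (z : ℂ) : ℂ :=
  1 + ∑ j ∈ Finset.range q, (θ ℓ (j + 1) : ℂ) * z ^ (j + 1)

/-- Spherical white noise `Z ~ SWN(0, {C_{ℓ;Z}})`: each time-slice is a zero-mean isotropic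
field with angular power spectrum `{C_{ℓ;Z}}`, and harmonic coefficients at distinct times
are uncorrelated. -/
structure IsSWN {Ω : Type} [MeasurableSpace Ω] (P : Measure Ω) (μ : Measure S2)
    (Y : ℕ → ℤ → S2 → ℂ) (Z : S2 → ℤ → Ω → ℝ) (Cz : ℕ → ℝ) : Prop where
  measurable : ∀ t : ℤ, Measurable (fun pr : S2 × Ω => Z pr.1 t pr.2)
  zeroMean : ∀ x t, ∫ ω, Z x t ω ∂P = 0
  sqInt : ∀ x t, MemLp (fun ω => Z x t ω) 2 P
  summable : Summable (fun ℓ : ℕ => (2 * (ℓ : ℝ) + 1) * Cz ℓ)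
  cov : ∀ (t : ℤ) (x y : S2), ∫ ω, Z x t ω * Z y t ω ∂P
      = ∑' ℓ : ℕ, ((2 * (ℓ : ℝ) + 1) / (4 * π)) * Cz ℓ * legendreP ℓ (sdot x y)
  coeffSame : ∀ (t : ℤ) (ℓ ℓ' : ℕ) (m m' : ℤ),
    ∫ ω, hCoeff μ Y Z ℓ m t ω * (starRingEnd ℂ) (hCoeff μ Y Z ℓ' m' t ω) ∂P
      = if ℓ = ℓ' ∧ m = m' then (Cz ℓ : ℂ) else 0
  coeffUncorr : ∀ (t s : ℤ), t ≠ s → ∀ (ℓ ℓ' : ℕ) (m m' : ℤ),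
    ∫ ω, hCoeff μ Y Z ℓ m t ω * (starRingEnd ℂ) (hCoeff μ Y Z ℓ' m' s ω) ∂P = 0

/-- `b = ∫_{-π}^{π} F(λ) dα_λ` as a mean-square Riemann–Stieltjes limit over partitions
`-π = λ_1 < ⋯ < λ_{J+1} = π` of mesh tending to `0`. -/
def IsRSLimit {Ω : Type} [MeasurableSpace Ω] (P : Measure Ω) (F : ℝ → ℂ)
    (α : ℝ → Ω → ℂ) (b : Ω → ℂ) : Prop :=
  ∀ ε > 0, ∃ δ > 0, ∀ (J : ℕ) (lam : ℕ → ℝ), 0 < J → lam 0 = -π → lam J = π →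
    (∀ j < J, lam j < lam (j + 1)) → (∀ j < J, lam (j + 1) - lam j < δ) →
    ∫ ω, ‖b ω -
        ∑ j ∈ Finset.range J, F (lam j) * (α (lam (j + 1)) ω - α (lam j) ω)‖ ^ 2 ∂P < ε

/-- The one-step mean-square prediction error
`inf_{f ∈ 𝓜_n} E|a(n+1) - f|²`, where `𝓜_n` is the closed linear span of `{a(t) : t ≤ n}`
in `L²(Ω)` (the infimum over the closed span equals the one over finite linear
combinations). -/
def predErr {Ω : Type} [MeasurableSpace Ω] (P : Measure Ω) (a : ℤ → Ω → ℂ) (n : ℤ) : ℝ :=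
  sInf {e : ℝ | ∃ (k : ℕ) (c : Fin k → ℂ) (ts : Fin k → ℤ), (∀ i, ts i ≤ n) ∧
    e = ∫ ω, ‖a (n + 1) ω - ∑ i, c i * a (ts i) ω‖ ^ 2 ∂P}

/-- The one-step mean-square prediction error of the functional process:
`inf_{f ∈ 𝓜_n} E‖T_{n+1} - f‖²_{L²(S²)}`, `𝓜_n` the closed span of `{T_t : t ≤ n}`. -/
def predErrField {Ω : Type} [MeasurableSpace Ω] (P : Measure Ω) (μ : Measure S2)
    (T : S2 → ℤ → Ω → ℝ) (n : ℤ) : ℝ :=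
  sInf {e : ℝ | ∃ (k : ℕ) (c : Fin k → ℂ) (ts : Fin k → ℤ), (∀ i, ts i ≤ n) ∧
    e = ∫ ω, ∫ x, ‖(T x (n + 1) ω : ℂ) -
          ∑ i, c i * (T x (ts i) ω : ℂ)‖ ^ 2 ∂μ ∂P}

/-- Membership in the closed linear span `𝓜_n` of `{a(t) : t ≤ n}` in `L²(Ω)`:
`V` can be approximated in mean square by finite linear combinations of past values. -/
def memSpan {Ω : Type} [MeasurableSpace Ω] (P : Measure Ω) (a : ℤ → Ω → ℂ) (n : ℤ)
    (V : Ω → ℂ) : Prop :=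
  ∀ ε > 0, ∃ (k : ℕ) (c : Fin k → ℂ) (ts : Fin k → ℤ), (∀ i, ts i ≤ n) ∧
    ∫ ω, ‖V ω - ∑ i, c i * a (ts i) ω‖ ^ 2 ∂P < ε


lemma exists_root_bound (p : ℕ) (φ : ℕ → ℕ → ℝ) (ℓ : ℕ)
    (h : ∀ z : ℂ, ‖z‖ ≤ 1 → phiPoly p φ ℓ z ≠ 0) :
    ∃ ξ : ℝ, 1 < ξ ∧ ∀ z : ℂ, phiPoly p φ ℓ z = 0 → ξ ≤ ‖z‖ := by
  set Q : Polynomial ℂ :=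
    1 - ∑ j ∈ Finset.range p, Polynomial.C ((φ ℓ (j+1) : ℂ)) * Polynomial.X ^ (j+1) with hQdef
  have heval : ∀ z : ℂ, Q.eval z = phiPoly p φ ℓ z := by
    intro z
    simp [hQdef, phiPoly, Polynomial.eval_finset_sum]
  have hQ0 : Q ≠ 0 := by
    intro hq
    have h0 := heval 0
    rw [hq] at h0
    simp [phiPoly] at h0
  set s : Finset ℝ := insert 2 (Q.roots.toFinset.image (fun z : ℂ => ‖z‖)) with hs
  have hne : s.Nonempty := Finset.insert_nonempty _ _
  refine ⟨s.min' hne, ?_, ?_⟩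
  · rw [Finset.lt_min'_iff]
    intro y hy
    rcases Finset.mem_insert.mp hy with rfl | hy
    · norm_num
    · obtain ⟨r, hr, rfl⟩ := Finset.mem_image.mp hy
      rw [Multiset.mem_toFinset] at hr
      have hre : phiPoly p φ ℓ r = 0 := by
        rw [← heval]; exact Polynomial.isRoot_of_mem_roots hr
      by_contra hle
      exact h r (not_lt.mp hle) hre
  · intro z hz
    apply Finset.min'_le
    apply Finset.mem_insert_of_mem
    apply Finset.mem_image_of_mem
    rw [Multiset.mem_toFinset, Polynomial.mem_roots hQ0]
    exact (heval z).trans hz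


/-- If the AR polynomials `φ_ℓ` have Hilbert–Schmidt coefficient sequences
and no zeros in the closed unit disk, then there is `δ > 0` with no zeros in `|z| < 1 + δ`,
uniformly over `ℓ`; equivalently there is `ξ* > 1` bounding from below the moduli of all
roots uniformly over `ℓ`. -/
theorem statement_10 (p : ℕ) (hp : 1 ≤ p) (φ : ℕ → ℕ → ℝ)
    (hHS : ∀ j : ℕ, 1 ≤ j → j ≤ p →
      Summable (fun ℓ : ℕ => (2 * (ℓ : ℝ) + 1) * (φ ℓ j) ^ 2))
    (hcausal : ∀ (ℓ : ℕ) (z : ℂ), ‖z‖ ≤ 1 → phiPoly p φ ℓ z ≠ 0) :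
    (∃ δ > (0 : ℝ), ∀ (ℓ : ℕ) (z : ℂ), ‖z‖ < 1 + δ → phiPoly p φ ℓ z ≠ 0) ∧
    (∃ ξ : ℝ, 1 < ξ ∧ ∀ (ℓ : ℕ) (z : ℂ), phiPoly p φ ℓ z = 0 → ξ ≤ ‖z‖) := by
  have hp0 : (0:ℝ) < p := by exact_mod_cast hp
  set ε : ℝ := 1 / (2 * p * 2 ^ p) with hε
  have hεpos : 0 < ε := by positivity
  -- eventually all coefficients are small
  have hsmall : ∀ j ∈ Finset.Icc 1 p, ∀ᶠ ℓ : ℕ in atTop, |φ ℓ j| < ε := by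
    intro j hj
    rw [Finset.mem_Icc] at hj
    have hs := (hHS j hj.1 hj.2).tendsto_atTop_zero
    have h2 : ∀ᶠ ℓ : ℕ in atTop, (2 * (ℓ:ℝ) + 1) * (φ ℓ j) ^ 2 < ε ^ 2 :=
      hs.eventually_lt_const (by positivity)
    filter_upwards [h2] with ℓ hℓ
    have hc : (0:ℝ) ≤ (ℓ:ℝ) := Nat.cast_nonneg ℓ
    nlinarith [_root_.sq_abs (φ ℓ j), abs_nonneg (φ ℓ j), sq_nonneg (φ ℓ j), hc]
  have hall : ∀ᶠ ℓ : ℕ in atTop, ∀ j ∈ Finset.Icc 1 p, |φ ℓ j| < ε :=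
    (Filter.eventually_all_finset _).mpr hsmall
  obtain ⟨L, hL⟩ := Filter.eventually_atTop.mp hall
  -- for ℓ ≥ L there is no zero in the disk of radius 2
  have key : ∀ ℓ : ℕ, L ≤ ℓ → ∀ z : ℂ, ‖z‖ ≤ 2 → phiPoly p φ ℓ z ≠ 0 := by
    intro ℓ hℓ z hz hzero
    have h1 : (∑ j ∈ Finset.range p, (φ ℓ (j+1) : ℂ) * z ^ (j+1)) = 1 := by
      unfold phiPoly at hzero
      linear_combination -hzero
    have h2 : (1:ℝ) ≤ ∑ j ∈ Finset.range p, ε * 2 ^ p := by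
      calc (1:ℝ) = ‖∑ j ∈ Finset.range p, (φ ℓ (j+1) : ℂ) * z ^ (j+1)‖ := by
            rw [h1]; simp
        _ ≤ ∑ j ∈ Finset.range p, ‖(φ ℓ (j+1) : ℂ) * z ^ (j+1)‖ :=
            norm_sum_le _ _
        _ ≤ ∑ j ∈ Finset.range p, ε * 2 ^ p := by
            apply Finset.sum_le_sum
            intro j hjr
            rw [Finset.mem_range] at hjr
            have hj1 : |φ ℓ (j+1)| < ε := hL ℓ hℓ (j+1) (Finset.mem_Icc.mpr ⟨Nat.le_add_left 1 j, hjr⟩)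
            rw [norm_mul, norm_pow, Complex.norm_real, Real.norm_eq_abs]
            have hzp : ‖z‖ ^ (j+1) ≤ 2 ^ p := by
              calc ‖z‖ ^ (j+1) ≤ 2 ^ (j+1) :=
                    pow_le_pow_left₀ (norm_nonneg z) hz _
                _ ≤ 2 ^ p := pow_le_pow_right₀ (by norm_num) hjr
            exact mul_le_mul hj1.le hzp (by positivity) hεpos.le
    rw [Finset.sum_const, Finset.card_range, nsmul_eq_mul] at h2
    have : (p:ℝ) * (ε * 2 ^ p) = 1 / 2 := by
      rw [hε]; field_simp
    rw [this] at h2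
    norm_num at h2
  -- root bounds for every ℓ
  choose g hg1 hg2 using fun ℓ => exists_root_bound p φ ℓ (hcausal ℓ)
  set s : Finset ℝ := insert 2 ((Finset.range L).image g) with hs
  have hne : s.Nonempty := Finset.insert_nonempty _ _
  set ξ : ℝ := s.min' hne with hξ
  have hξ1 : 1 < ξ := by
    rw [hξ, Finset.lt_min'_iff]
    intro y hy
    rcases Finset.mem_insert.mp hy with rfl | hy
    · norm_num
    · obtain ⟨ℓ, _, rfl⟩ := Finset.mem_image.mp hy
      exact hg1 ℓ
  have hξ2 : ξ ≤ 2 := Finset.min'_le _ _ (Finset.mem_insert_self _ _)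
  have hroot : ∀ (ℓ : ℕ) (z : ℂ), phiPoly p φ ℓ z = 0 → ξ ≤ ‖z‖ := by
    intro ℓ z hz
    rcases lt_or_ge ℓ L with hlt | hge
    · exact le_trans (Finset.min'_le _ _ (Finset.mem_insert_of_mem
        (Finset.mem_image_of_mem g (Finset.mem_range.mpr hlt)))) (hg2 ℓ z hz)
    · by_contra hcon
      push_neg at hcon
      exact key ℓ hge z (le_of_lt (lt_of_lt_of_le hcon hξ2)) hz
  refine ⟨⟨ξ - 1, by linarith, ?_⟩, ⟨ξ, hξ1, hroot⟩⟩
  intro ℓ z hz hzero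
  have := hroot ℓ z hzero
  have : ‖z‖ < ξ := by linarith [hz]
  linarith [hroot ℓ z hzero]
end
end

section
/- Let p ≥ 1, q ≥ 0 and for each ℓ ∈ ℕ let φ_ℓ(z) = 1 − φ_{ℓ;1}z − ⋯ − φ_{ℓ;p}z^p and θ_ℓ(z) = 1 + θ_{ℓ;1}z + ⋯ + θ_{ℓ;q}z^q be polynomials whose coefficient sequences satisfy Σ_ℓ (2ℓ+1)φ_{ℓ;j}² < ∞ and Σ_ℓ (2ℓ+1)θ_{ℓ;j}² < ∞ for each j, with φ_ℓ and θ_ℓ having no common zeros and φ_ℓ(z) ≠ 0 for |z| ≤ 1, all ℓ. Writing θ_ℓ(z)/φ_ℓ(z) = Σ_{j=0}^∞ ψ_{ℓ;j} z^j for |z| ≤ 1, one has Σ_{j=0}^∞ |ψ_{ℓ;j}|² = (1/2π)·∫_{−π}^{π} |θ_ℓ(e^{iλ})/φ_ℓ(e^{iλ})|² dλ ≤ C·(ξ_*/(ξ_*−1))^{2p} for a constant C independent of ℓ, where ξ_* > 1 is a uniform lower bound on the moduli of the roots of the φ_ℓ; consequently, for any nonnegative sequence {C_{ℓ;Z}}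 with Σ_ℓ (2ℓ+1)C_{ℓ;Z} < ∞, Σ_{ℓ=0}^∞ Σ_{j=0}^∞ |ψ_{ℓ;j}|²·((2ℓ+1)/(4π))·C_{ℓ;Z} < ∞. -/
noncomputable section

open MeasureTheory Complex Real Filter Topology

lemma sq_summable_and_le (ψ : ℕ → ℝ) (hψ : Summable fun j => |ψ j|) :
    Summable (fun j : ℕ => (ψ j) ^ 2) ∧ ∑' j : ℕ, (ψ j) ^ 2 ≤ (∑' j, |ψ j|) ^ 2 := by
  have hle : ∀ j, (ψ j) ^ 2 ≤ |ψ j| * ∑' i, |ψ i| := by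
    intro j
    have h1 : |ψ j| ≤ ∑' i, |ψ i| := hψ.le_tsum j (fun i _ => abs_nonneg _)
    calc (ψ j) ^ 2 = |ψ j| * |ψ j| := by rw [abs_mul_abs_self]; ring
    _ ≤ |ψ j| * ∑' i, |ψ i| := mul_le_mul_of_nonneg_left h1 (abs_nonneg _)
  have hs : Summable (fun j : ℕ => (ψ j) ^ 2) :=
    Summable.of_nonneg_of_le (fun j => sq_nonneg _) hle (hψ.mul_right _)
  refine ⟨hs, ?_⟩
  calc ∑' j, (ψ j) ^ 2 ≤ ∑' j, |ψ j| * ∑' i, |ψ i| := Summable.tsum_le_tsum hle hs (hψ.mul_right _)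
  _ = (∑' j, |ψ j|) ^ 2 := by rw [tsum_mul_right]; ring

open AddCircle in
set_option maxHeartbeats 1000000 in
lemma parseval_aux (ψ : ℕ → ℝ) (hψ : Summable fun j => |ψ j|) (F : ℝ → ℂ)
    (hF : ∀ lam : ℝ, F lam = ∑' j : ℕ, (ψ j : ℂ) * Complex.exp (Complex.I * lam) ^ j) :
    ∑' j : ℕ, (ψ j) ^ 2 = (1 / (2 * π)) * ∫ lam in (-π)..π, ‖F lam‖ ^ 2 := by
  haveI hT : Fact (0 < 2 * π) := ⟨by positivity⟩
  -- the function on the circle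
  have hcont : Continuous fun x : AddCircle (2 * π) => ∑' j : ℕ, (ψ j : ℂ) * fourier (j : ℤ) x := by
    refine continuous_tsum (fun j => continuous_const.mul (map_continuous _)) hψ ?_
    intro j x
    simp [norm_mul, Circle.norm_coe]
  set g : C(AddCircle (2 * π), ℂ) := ⟨_, hcont⟩ with hg
  -- integrals of fourier monomials
  have int_fourier : ∀ k : ℤ,
      (∫ t, fourier k t ∂(@haarAddCircle (2 * π) hT)) = if k = 0 then 1 else 0 := by
    intro k
    split_ifs with h
    · subst h
      have h1 : (fun t : AddCircle (2 * π) => (fourier 0 : C(AddCircle (2 * π), ℂ)) t)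
          = fun _ => (1 : ℂ) := funext fun t => fourier_zero
      rw [h1, integral_const, probReal_univ, one_smul]
    · exact integral_eq_zero_of_add_right_eq_neg (fourier_add_half_inv_index h hT.out)
  -- integrability of each term
  have hint : ∀ (c : ℝ) (k : ℤ), Integrable (fun t : AddCircle (2 * π) => (c : ℂ) * fourier k t)
      (@haarAddCircle (2 * π) hT) := by
    intro c k
    exact (continuous_const.mul (map_continuous _)).integrable_of_hasCompactSupport
      (HasCompactSupport.of_compactSpace _)
  -- Fourier coefficients of g
  have hcoeff : ∀ n : ℤ, fourierCoeff (⇑g) n = if 0 ≤ n then ((ψ n.toNat : ℝ) : ℂ) else 0 := by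
    intro n
    have h1 : ∀ t : AddCircle (2 * π), fourier (-n) t • g t
        = ∑' j : ℕ, (ψ j : ℂ) * fourier (-n + (j : ℤ)) t := by
      intro t
      rw [smul_eq_mul]
      show fourier (-n) t * ∑' j : ℕ, (ψ j : ℂ) * fourier (j : ℤ) t = _
      rw [← tsum_mul_left]
      refine tsum_congr fun j => ?_
      rw [fourier_add]; ring
    have h2 : fourierCoeff (⇑g) n
        = ∫ t, ∑' j : ℕ, (ψ j : ℂ) * fourier (-n + (j : ℤ)) t ∂(@haarAddCircle (2 * π) hT) := by
      rw [fourierCoeff]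
      exact integral_congr_ae (Filter.Eventually.of_forall h1)
    rw [h2, ← integral_tsum_of_summable_integral_norm (fun j => hint _ _) ?_]
    · have h3 : ∀ j : ℕ, (∫ t, (ψ j : ℂ) * fourier (-n + (j : ℤ)) t ∂(@haarAddCircle (2 * π) hT))
          = (ψ j : ℂ) * (if -n + (j : ℤ) = 0 then 1 else 0) := by
        intro j
        rw [integral_const_mul, int_fourier]
      simp_rw [h3]
      by_cases hn : 0 ≤ n
      · rw [if_pos hn]
        have h4 : ∀ j : ℕ, (ψ j : ℂ) * (if -n + (j : ℤ) = 0 then 1 else 0)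
            = if j = n.toNat then ((ψ n.toNat : ℝ) : ℂ) else 0 := by
          intro j
          by_cases hj : (j : ℤ) = n
          · have hjj : j = n.toNat := by omega
            rw [if_pos (show -n + (j : ℤ) = 0 by omega), if_pos hjj, mul_one, hjj]
          · have h5 : ¬(-n + (j : ℤ) = 0) := by omega
            have h6 : ¬(j = n.toNat) := by omega
            simp [h5, h6]
        simp_rw [h4]
        exact tsum_ite_eq _ _
      · rw [if_neg hn]
        have h4 : ∀ j : ℕ, (ψ j : ℂ) * (if -n + (j : ℤ) = 0 then 1 else 0) = 0 := by
          intro j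
          have h5 : ¬(-n + (j : ℤ) = 0) := by omega
          simp [h5]
        simp_rw [h4, tsum_zero]
    · refine Summable.of_nonneg_of_le (fun j => integral_nonneg fun t => norm_nonneg _)
        (fun j => ?_) hψ
      have : ∀ t : AddCircle (2 * π), ‖(ψ j : ℂ) * fourier (-n + (j : ℤ)) t‖ = |ψ j| := by
        intro t
        simp [norm_mul, Circle.norm_coe]
      simp_rw [this]
      rw [integral_const, probReal_univ, smul_eq_mul, one_mul]
  -- Parseval
  have key := tsum_sq_fourierCoeff (ContinuousMap.toLp (E := ℂ) 2 haarAddCircle ℂ g)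
  have keyL : ∀ n : ℤ, fourierCoeff (⇑(ContinuousMap.toLp (E := ℂ) 2 haarAddCircle ℂ g)) n
      = fourierCoeff (⇑g) n := fun n => fourierCoeff_toLp g n
  simp_rw [keyL] at key
  -- LHS of key
  have hs : Summable (fun j : ℕ => (ψ j) ^ 2) := (sq_summable_and_le ψ hψ).1
  have e1 : (fun k : ℕ => ‖fourierCoeff (⇑g) (k : ℤ)‖ ^ 2) = fun k : ℕ => (ψ k) ^ 2 := by
    funext k
    rw [hcoeff, if_pos (Int.ofNat_nonneg k), Complex.norm_real, Real.norm_eq_abs,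
      _root_.sq_abs, Int.toNat_natCast]
  have hLHS : HasSum (fun n : ℤ => ‖fourierCoeff (⇑g) n‖ ^ 2) (∑' j : ℕ, (ψ j) ^ 2) := by
    have hnat : HasSum (fun k : ℕ => ‖fourierCoeff (⇑g) (k : ℤ)‖ ^ 2) (∑' j : ℕ, (ψ j) ^ 2) := by
      rw [e1]; exact hs.hasSum
    have hneg : HasSum (fun k : ℕ => ‖fourierCoeff (⇑g) (-((k : ℤ) + 1))‖ ^ 2) 0 := by
      have e2 : (fun k : ℕ => ‖fourierCoeff (⇑g) (-((k : ℤ) + 1))‖ ^ 2) = fun _ => (0 : ℝ) := by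
        funext k
        rw [hcoeff, if_neg (by omega), norm_zero]
        norm_num
      rw [e2]; exact hasSum_zero
    exact add_zero (∑' j : ℕ, (ψ j) ^ 2) ▸ HasSum.of_nat_of_neg_add_one hnat hneg
  rw [hLHS.tsum_eq] at key
  rw [key]
  -- RHS: convert the haar integral to an interval integral
  have hg_ae : (fun t => ‖(⇑(ContinuousMap.toLp (E := ℂ) 2 haarAddCircle ℂ g)) t‖ ^ 2)
      =ᵐ[@haarAddCircle (2 * π) hT] (fun t => ‖g t‖ ^ 2) := by
    filter_upwards [ContinuousMap.coeFn_toLp (p := 2) haarAddCircle (𝕜 := ℂ) g] with t ht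
    rw [ht]
  rw [integral_congr_ae hg_ae]
  have hvol : ∫ lam in (-π)..(-π + 2 * π), ‖g ((lam : ℝ) : AddCircle (2 * π))‖ ^ 2
      = ∫ t : AddCircle (2 * π), ‖g t‖ ^ 2 ∂(ENNReal.ofReal (2 * π) • haarAddCircle) := by
    rw [AddCircle.intervalIntegral_preimage (2 * π) (-π) (fun z => ‖g z‖ ^ 2),
      ← volume_eq_smul_haarAddCircle]
  rw [integral_smul_measure, ENNReal.toReal_ofReal hT.out.le, smul_eq_mul] at hvol
  have hb : -π + 2 * π = π := by ring
  rw [hb] at hvol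
  have hgF : ∀ lam : ℝ, ‖g ((lam : ℝ) : AddCircle (2 * π))‖ ^ 2 = ‖F lam‖ ^ 2 := by
    intro lam
    rw [hF lam]
    congr 2
    refine tsum_congr fun j => ?_
    congr 1
    rw [fourier_coe_apply, ← Complex.exp_nat_mul]
    congr 1
    have hπ : ((π : ℝ) : ℂ) ≠ 0 := Complex.ofReal_ne_zero.mpr Real.pi_ne_zero
    push_cast
    field_simp
  simp_rw [hgF] at hvol
  rw [hvol]
  have hπ := Real.pi_ne_zero
  field_simp

lemma integral_bound_aux (F : ℝ → ℂ) (hF : Continuous F) (B : ℝ)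
    (hB : ∀ lam : ℝ, ‖F lam‖ ^ 2 ≤ B) :
    (1 / (2 * π)) * ∫ lam in (-π)..π, ‖F lam‖ ^ 2 ≤ B := by
  have hpi := Real.pi_pos
  have hi : IntervalIntegrable (fun lam => ‖F lam‖ ^ 2) volume (-π) π :=
    (hF.norm.pow 2).intervalIntegrable _ _
  have h1 : ∫ lam in (-π)..π, ‖F lam‖ ^ 2 ≤ ∫ _ in (-π)..π, B :=
    intervalIntegral.integral_mono_on (by linarith) hi intervalIntegrable_const
      (fun x _ => hB x)
  rw [intervalIntegral.integral_const, smul_eq_mul] at h1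
  have h2 : (1 / (2 * π)) * ∫ lam in (-π)..π, ‖F lam‖ ^ 2
      ≤ (1 / (2 * π)) * ((π - -π) * B) := mul_le_mul_of_nonneg_left h1 (by positivity)
  have h3 : (1 / (2 * π)) * ((π - -π) * B) = B := by
    field_simp
    ring
  linarith


/-- For causal SPHARMA polynomials, the power-series coefficients `ψ_{ℓ;j}`
of `θ_ℓ/φ_ℓ` satisfy `Σ_j ψ_{ℓ;j}² = (1/2π) ∫_{-π}^π |θ_ℓ(e^{iλ})/φ_ℓ(e^{iλ})|² dλ
≤ C (ξ*/(ξ*-1))^{2p}` uniformly over `ℓ`; consequently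
`Σ_ℓ Σ_j ψ_{ℓ;j}² ((2ℓ+1)/4π) C_{ℓ;Z} < ∞` for any summable nonnegative spectrum. -/
theorem statement_11 (p q : ℕ) (hp : 1 ≤ p) (φ θ : ℕ → ℕ → ℝ)
    (hHSφ : ∀ j : ℕ, 1 ≤ j → j ≤ p →
      Summable (fun ℓ : ℕ => (2 * (ℓ : ℝ) + 1) * (φ ℓ j) ^ 2))
    (hHSθ : ∀ j : ℕ, 1 ≤ j → j ≤ q →
      Summable (fun ℓ : ℕ => (2 * (ℓ : ℝ) + 1) * (θ ℓ j) ^ 2))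
    (hnocommon : ∀ (ℓ : ℕ) (z : ℂ), ¬(phiPoly p φ ℓ z = 0 ∧ thetaPoly q θ ℓ z = 0))
    (hcausal : ∀ (ℓ : ℕ) (z : ℂ), ‖z‖ ≤ 1 → phiPoly p φ ℓ z ≠ 0)
    (ψ : ℕ → ℕ → ℝ)
    (hψabs : ∀ ℓ : ℕ, Summable (fun j : ℕ => |ψ ℓ j|))
    (hψ : ∀ (ℓ : ℕ) (z : ℂ), ‖z‖ ≤ 1 →
      (∑' j : ℕ, (ψ ℓ j : ℂ) * z ^ j) * phiPoly p φ ℓ z = thetaPoly q θ ℓ z)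
    (ξ : ℝ) (hξ : 1 < ξ)
    (hroot : ∀ (ℓ : ℕ) (z : ℂ), phiPoly p φ ℓ z = 0 → ξ ≤ ‖z‖) :
    (∀ ℓ : ℕ, ∑' j : ℕ, (ψ ℓ j) ^ 2 =
      (1 / (2 * π)) * ∫ lam in (-π)..π,
        ‖thetaPoly q θ ℓ (Complex.exp (Complex.I * lam)) /
          phiPoly p φ ℓ (Complex.exp (Complex.I * lam))‖ ^ 2) ∧
    (∃ C : ℝ, ∀ ℓ : ℕ, ∑' j : ℕ, (ψ ℓ j) ^ 2 ≤ C * (ξ / (ξ - 1)) ^ (2 * p)) ∧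
    (∀ Cz : ℕ → ℝ, (∀ ℓ, 0 ≤ Cz ℓ) →
      Summable (fun ℓ : ℕ => (2 * (ℓ : ℝ) + 1) * Cz ℓ) →
      Summable (fun ℓ : ℕ =>
        (∑' j : ℕ, (ψ ℓ j) ^ 2) * ((2 * (ℓ : ℝ) + 1) / (4 * π)) * Cz ℓ)) := by
  have hpi := Real.pi_pos
  -- Part 1: Parseval identity
  have part1 : ∀ ℓ : ℕ, ∑' j : ℕ, (ψ ℓ j) ^ 2 =
      (1 / (2 * π)) * ∫ lam in (-π)..π,
        ‖thetaPoly q θ ℓ (Complex.exp (Complex.I * lam)) /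
          phiPoly p φ ℓ (Complex.exp (Complex.I * lam))‖ ^ 2 := by
    intro ℓ
    apply parseval_aux _ (hψabs ℓ)
    intro lam
    have habs : ‖Complex.exp (Complex.I * lam)‖ ≤ 1 := by
      rw [Complex.norm_exp]
      simp
    have hφ := hcausal ℓ _ habs
    rw [div_eq_iff hφ]
    exact (hψ ℓ _ habs).symm
  -- uniform bound for θ coefficients
  set Mθ : ℝ := ∑ j ∈ Finset.range q,
    Real.sqrt (∑' ℓ' : ℕ, (2 * (ℓ' : ℝ) + 1) * (θ ℓ' (j + 1)) ^ 2) with hMθ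
  have hMθ0 : 0 ≤ Mθ := Finset.sum_nonneg fun j _ => Real.sqrt_nonneg _
  have hθabs : ∀ (ℓ : ℕ) (z : ℂ), ‖z‖ ≤ 1 →
      ‖thetaPoly q θ ℓ z‖ ≤ 1 + Mθ := by
    intro ℓ z hz
    rw [thetaPoly]
    calc ‖1 + ∑ j ∈ Finset.range q, (θ ℓ (j + 1) : ℂ) * z ^ (j + 1)‖
        ≤ ‖(1 : ℂ)‖ + ‖∑ j ∈ Finset.range q, (θ ℓ (j + 1) : ℂ) * z ^ (j + 1)‖ :=
          norm_add_le _ _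
      _ ≤ 1 + ∑ j ∈ Finset.range q, ‖(θ ℓ (j + 1) : ℂ) * z ^ (j + 1)‖ := by
          rw [norm_one]
          exact add_le_add_right (norm_sum_le _ _) 1
      _ ≤ 1 + Mθ := by
          refine add_le_add_right (Finset.sum_le_sum fun j hj => ?_) 1
          have h1 : ‖(θ ℓ (j + 1) : ℂ) * z ^ (j + 1)‖ ≤ |θ ℓ (j + 1)| := by
            rw [norm_mul, Complex.norm_real, Real.norm_eq_abs, norm_pow]
            calc |θ ℓ (j + 1)| * ‖z‖ ^ (j + 1) ≤ |θ ℓ (j + 1)| * 1 := by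
                  exact mul_le_mul_of_nonneg_left
                    (pow_le_one₀ (norm_nonneg z) hz) (abs_nonneg _)
              _ = |θ ℓ (j + 1)| := mul_one _
          refine h1.trans ?_
          have hsum := hHSθ (j + 1) (by omega) (Nat.succ_le_of_lt (Finset.mem_range.mp hj))
          have h2 : (θ ℓ (j + 1)) ^ 2 ≤ ∑' ℓ' : ℕ, (2 * (ℓ' : ℝ) + 1) * (θ ℓ' (j + 1)) ^ 2 := by
            have h3 : (θ ℓ (j + 1)) ^ 2 ≤ (2 * (ℓ : ℝ) + 1) * (θ ℓ (j + 1)) ^ 2 := by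
              nlinarith [sq_nonneg (θ ℓ (j + 1)), Nat.cast_nonneg (α := ℝ) ℓ]
            exact h3.trans (hsum.le_tsum ℓ fun i _ => by positivity)
          calc |θ ℓ (j + 1)| = Real.sqrt ((θ ℓ (j + 1)) ^ 2) := (Real.sqrt_sq_eq_abs _).symm
            _ ≤ Real.sqrt (∑' ℓ' : ℕ, (2 * (ℓ' : ℝ) + 1) * (θ ℓ' (j + 1)) ^ 2) :=
                Real.sqrt_le_sqrt h2
  -- φ coefficients tend to zero
  have hφtend : Tendsto (fun ℓ : ℕ => ∑ j ∈ Finset.range p, |φ ℓ (j + 1)|) atTop (𝓝 0) := by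
    have h0 : ∀ j ∈ Finset.range p, Tendsto (fun ℓ : ℕ => |φ ℓ (j + 1)|) atTop (𝓝 0) := by
      intro j hj
      have hsum := hHSφ (j + 1) (by omega) (Nat.succ_le_of_lt (Finset.mem_range.mp hj))
      have h1 : Tendsto (fun ℓ : ℕ => (2 * (ℓ : ℝ) + 1) * (φ ℓ (j + 1)) ^ 2) atTop (𝓝 0) :=
        hsum.tendsto_atTop_zero
      have h2 : Tendsto (fun ℓ : ℕ => (φ ℓ (j + 1)) ^ 2) atTop (𝓝 0) := by
        refine squeeze_zero (fun ℓ => sq_nonneg _) (fun ℓ => ?_) h1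
        nlinarith [sq_nonneg (φ ℓ (j + 1)), Nat.cast_nonneg (α := ℝ) ℓ]
      have h3 := (Real.continuous_sqrt.tendsto 0).comp h2
      simp only [Function.comp_def, Real.sqrt_zero] at h3
      refine h3.congr fun ℓ => ?_
      exact Real.sqrt_sq_eq_abs _
    have := tendsto_finset_sum (Finset.range p) h0
    simpa using this
  obtain ⟨L, hL⟩ := Filter.eventually_atTop.mp
    (hφtend.eventually_lt_const (by norm_num : (0 : ℝ) < 1 / 2))
  -- lower bound for φ on the closed unit disk, for ℓ ≥ L
  have hφlow : ∀ ℓ ≥ L, ∀ z : ℂ, ‖z‖ ≤ 1 →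
      (1 : ℝ) / 2 ≤ ‖phiPoly p φ ℓ z‖ := by
    intro ℓ hℓ z hz
    rw [phiPoly]
    have h1 : ‖∑ j ∈ Finset.range p, (φ ℓ (j + 1) : ℂ) * z ^ (j + 1)‖ ≤
        ∑ j ∈ Finset.range p, |φ ℓ (j + 1)| := by
      refine (norm_sum_le _ _).trans (Finset.sum_le_sum fun j hj => ?_)
      rw [norm_mul, Complex.norm_real, Real.norm_eq_abs, norm_pow]
      calc |φ ℓ (j + 1)| * ‖z‖ ^ (j + 1) ≤ |φ ℓ (j + 1)| * 1 :=
            mul_le_mul_of_nonneg_left (pow_le_one₀ (norm_nonneg z) hz) (abs_nonneg _)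
        _ = |φ ℓ (j + 1)| := mul_one _
    have h2 : ‖∑ j ∈ Finset.range p, (φ ℓ (j + 1) : ℂ) * z ^ (j + 1)‖ < 1 / 2 :=
      lt_of_le_of_lt h1 (hL ℓ hℓ)
    have h3 : (1 : ℝ) - ‖∑ j ∈ Finset.range p, (φ ℓ (j + 1) : ℂ) * z ^ (j + 1)‖ ≤
        ‖1 - ∑ j ∈ Finset.range p, (φ ℓ (j + 1) : ℂ) * z ^ (j + 1)‖ := by
      have := norm_sub_norm_le (1 : ℂ)
        (∑ j ∈ Finset.range p, (φ ℓ (j + 1) : ℂ) * z ^ (j + 1))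
      simpa using this
    linarith
  -- the uniform bound
  set B : ℝ := (∑ ℓ ∈ Finset.range L, (∑' j : ℕ, |ψ ℓ j|) ^ 2) + 4 * (1 + Mθ) ^ 2 with hB
  have hBdd : ∀ ℓ : ℕ, ∑' j : ℕ, (ψ ℓ j) ^ 2 ≤ B := by
    intro ℓ
    rcases lt_or_ge ℓ L with hℓ | hℓ
    · have h1 := (sq_summable_and_le (ψ ℓ) (hψabs ℓ)).2
      have h2 : (∑' j : ℕ, |ψ ℓ j|) ^ 2 ≤ ∑ ℓ' ∈ Finset.range L, (∑' j : ℕ, |ψ ℓ' j|) ^ 2 :=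
        Finset.single_le_sum (f := fun ℓ' : ℕ => (∑' j : ℕ, |ψ ℓ' j|) ^ 2)
          (fun i _ => sq_nonneg _) (Finset.mem_range.mpr hℓ)
      have h3 : (0 : ℝ) ≤ 4 * (1 + Mθ) ^ 2 := by positivity
      rw [hB]; linarith
    · rw [part1 ℓ]
      have hcontF : Continuous (fun lam : ℝ =>
          thetaPoly q θ ℓ (Complex.exp (Complex.I * lam)) /
            phiPoly p φ ℓ (Complex.exp (Complex.I * lam))) := by
        have he : Continuous (fun lam : ℝ => Complex.exp (Complex.I * lam)) :=
          Complex.continuous_exp.comp (continuous_const.mul Complex.continuous_ofReal)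
        have hθc : Continuous (fun z : ℂ => thetaPoly q θ ℓ z) := by
          simp only [thetaPoly]
          exact continuous_const.add
            (continuous_finset_sum _ fun j _ => continuous_const.mul (continuous_pow _))
        have hφc : Continuous (fun z : ℂ => phiPoly p φ ℓ z) := by
          simp only [phiPoly]
          exact continuous_const.sub
            (continuous_finset_sum _ fun j _ => continuous_const.mul (continuous_pow _))
        refine (hθc.comp he).div (hφc.comp he) fun lam => ?_
        refine hcausal ℓ _ ?_
        rw [Complex.norm_exp]
        simp
      have hpt : ∀ lam : ℝ,
          ‖thetaPoly q θ ℓ (Complex.exp (Complex.I * lam)) /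
            phiPoly p φ ℓ (Complex.exp (Complex.I * lam))‖ ^ 2 ≤ 4 * (1 + Mθ) ^ 2 := by
        intro lam
        have habs : ‖Complex.exp (Complex.I * lam)‖ ≤ 1 := by
          rw [Complex.norm_exp]; simp
        have h1 := hθabs ℓ _ habs
        have h2 := hφlow ℓ hℓ _ habs
        rw [norm_div]
        have h4 : ‖thetaPoly q θ ℓ (Complex.exp (Complex.I * lam))‖ /
            ‖phiPoly p φ ℓ (Complex.exp (Complex.I * lam))‖ ≤
            (1 + Mθ) / (1 / 2) :=
          div_le_div₀ (by linarith) h1 (by norm_num) h2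
        calc (‖thetaPoly q θ ℓ (Complex.exp (Complex.I * lam))‖ /
            ‖phiPoly p φ ℓ (Complex.exp (Complex.I * lam))‖) ^ 2
            ≤ ((1 + Mθ) / (1 / 2)) ^ 2 := by
              refine pow_le_pow_left₀ ?_ h4 2
              positivity
          _ = 4 * (1 + Mθ) ^ 2 := by ring
      have h5 := integral_bound_aux _ hcontF (4 * (1 + Mθ) ^ 2) hpt
      have h6 : (0 : ℝ) ≤ ∑ ℓ' ∈ Finset.range L, (∑' j : ℕ, |ψ ℓ' j|) ^ 2 :=
        Finset.sum_nonneg fun i _ => sq_nonneg _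
      rw [hB]; linarith
  have hB0 : 0 ≤ B := le_trans (tsum_nonneg fun j => sq_nonneg _) (hBdd 0)
  
  refine ⟨part1, ?_, ?_⟩
  · refine ⟨B, fun ℓ => ?_⟩
    have hK : 1 ≤ (ξ / (ξ - 1)) ^ (2 * p) := by
      refine one_le_pow₀ ?_
      rw [le_div_iff₀ (by linarith)]
      linarith
    calc ∑' j : ℕ, (ψ ℓ j) ^ 2 ≤ B := hBdd ℓ
      _ ≤ B * (ξ / (ξ - 1)) ^ (2 * p) := le_mul_of_one_le_right hB0 hK
  · intro Cz hCz hCzsum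
    refine Summable.of_nonneg_of_le (fun ℓ => ?_) (fun ℓ => ?_)
      (hCzsum.mul_left (B * (1 / (4 * π))))
    · exact mul_nonneg (mul_nonneg (tsum_nonneg fun j => sq_nonneg _) (by positivity)) (hCz ℓ)
    · calc (∑' j : ℕ, (ψ ℓ j) ^ 2) * ((2 * (ℓ : ℝ) + 1) / (4 * π)) * Cz ℓ
          ≤ B * ((2 * (ℓ : ℝ) + 1) / (4 * π)) * Cz ℓ := by
            refine mul_le_mul_of_nonneg_right (mul_le_mul_of_nonneg_right (hBdd ℓ) ?_) (hCz ℓ)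
            positivity
        _ = B * (1 / (4 * π)) * ((2 * (ℓ : ℝ) + 1) * Cz ℓ) := by ring
end
end
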